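/- Let {I_n} be independent Bernoulli random variables with P(I_n = 1) = p_n = α_n/s_n for positive α_n with s_n = Σ_{k≤n} α_k → ∞, and let N_n = Σ_{k≤n} I_k, E_n = Σ_{k≤n} p_k. Then N_n / E_n → 1 almost surely as n → ∞. -/

import Mathlib

open MeasureTheory ProbabilityTheory Filter Set


lemma ratio_tendsto_aux : Tendsto (fun j : ℕ => (((j:ℝ)+1)^2+1)/(j:ℝ)^2) atTop (nhds 1) := by
  have h1 : Tendsto (fun j : ℕ => 1 + 2/(j:ℝ) + 2/(j:ℝ)^2) atTop (nhds 1) := by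
    have a := tendsto_const_div_atTop_nhds_zero_nat (2:ℝ)
    have b : Tendsto (fun j : ℕ => 2/(j:ℝ)^2) atTop (nhds 0) :=
      tendsto_const_nhds.div_atTop
        ((tendsto_pow_atTop two_ne_zero).comp tendsto_natCast_atTop_atTop)
    have := (tendsto_const_nhds (x := (1:ℝ)) (f := atTop)).add (a.add b)
    simpa using this.congr (by intro j; ring)
  refine h1.congr' ?_
  filter_upwards [eventually_ge_atTop 1] with j hj
  have : (j:ℝ) ≠ 0 := Nat.cast_ne_zero.2 (by omega)
  field_simp
  ring

lemma ratio_tendsto_aux' : Tendsto (fun j : ℕ => (j:ℝ)^2/(((j:ℝ)+1)^2+1)) atTop (nhds 1) := by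
  have := ratio_tendsto_aux.inv₀ one_ne_zero
  simpa [inv_div] using this

/-- Deterministic sandwich argument. -/
lemma sandwich_aux (N E : ℕ → ℝ) (u : ℕ → ℕ)
    (hNmono : Monotone N) (hNpos : ∀ n, 0 ≤ N n)
    (hEmono : Monotone E) (hE1 : ∀ n, 1 ≤ E n) (hEn : ∀ n, E n ≤ n + 1)
    (hu0 : u 0 = 0) (hu : ∀ j : ℕ, (j:ℝ)^2 ≤ E (u j)) (hu2 : ∀ j, E (u j) ≤ (j:ℝ)^2 + 1)
    (h1 : Tendsto (fun j => N (u j) / E (u j)) atTop (nhds 1)) :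
    Tendsto (fun n => N n / E n) atTop (nhds 1) := by
  classical
  have Epos : ∀ n, (0:ℝ) < E n := fun n => lt_of_lt_of_le one_pos (hE1 n)
  set J : ℕ → ℕ := fun n => Nat.findGreatest (fun j => u j ≤ n) (n + 2) with hJ
  have hP0 : ∀ n, u 0 ≤ n := fun n => by simp [hu0]
  have hspec : ∀ n, u (J n) ≤ n := fun n =>
    Nat.findGreatest_spec (P := fun j => u j ≤ n) (m := 0) (Nat.zero_le _) (hP0 n)
  -- if u j ≤ n then (j:ℝ)^2 ≤ n+1
  have hub : ∀ j n, u j ≤ n → (j:ℝ)^2 ≤ (n:ℝ) + 1 := by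
    intro j n h
    calc (j:ℝ)^2 ≤ E (u j) := hu j
    _ ≤ (u j : ℝ) + 1 := hEn (u j)
    _ ≤ (n:ℝ) + 1 := by have := (Nat.cast_le (α := ℝ)).2 h; linarith
  have hJle : ∀ n, J n ≤ n + 1 := by
    intro n
    by_contra h
    have h2 : J n ≤ n + 2 := Nat.findGreatest_le _
    have h3 : J n = n + 2 := by omega
    have h4 : u (n + 2) ≤ n := by
      have := hspec n; rwa [h3] at this
    have := hub (n+2) n h4
    push_cast at this
    nlinarith [Nat.cast_nonneg (α := ℝ) n]
  have hlt : ∀ n, n < u (J n + 1) := by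
    intro n
    have hgt := Nat.findGreatest_is_greatest (P := fun j => u j ≤ n)
      (lt_add_one (J n)) (by have := hJle n; omega)
    omega
  have hJtop : Tendsto J atTop atTop := by
    rw [tendsto_atTop_atTop]
    intro b
    refine ⟨max (u b) b, fun n hn => ?_⟩
    exact Nat.le_findGreatest (by omega : b ≤ n + 2)
      (le_trans (le_max_left _ _) hn)
  have hJ1 : ∀ᶠ n in atTop, 1 ≤ J n := hJtop.eventually_ge_atTop 1
  -- upper and lower bounding sequences
  have hf : Tendsto (fun j : ℕ => (N (u (j+1)) / E (u (j+1))) * ((((j:ℝ)+1)^2+1)/(j:ℝ)^2))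
      atTop (nhds 1) := by
    have := (h1.comp (tendsto_add_atTop_nat 1)).mul ratio_tendsto_aux
    simpa using this
  have hg : Tendsto (fun j : ℕ => (N (u j) / E (u j)) * ((j:ℝ)^2/(((j:ℝ)+1)^2+1)))
      atTop (nhds 1) := by
    have := h1.mul ratio_tendsto_aux'
    simpa using this
  refine tendsto_of_tendsto_of_tendsto_of_le_of_le' (hg.comp hJtop) (hf.comp hJtop) ?_ ?_
  · -- lower bound
    filter_upwards [hJ1] with n hn
    set j := J n with hj
    have hj2pos : (0:ℝ) < (j:ℝ)^2 := by
      have : (1:ℝ) ≤ (j:ℝ) := by exact_mod_cast hn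
      nlinarith
    have step1 : N (u j) / E (u (j+1)) ≤ N n / E n :=
      div_le_div₀ (hNpos n) (hNmono (hspec n)) (Epos n) (hEmono (hlt n).le)
    have step3 : (j:ℝ)^2/(((j:ℝ)+1)^2+1) ≤ E (u j) / E (u (j+1)) :=
      div_le_div₀ (le_trans zero_le_one (hE1 _)) (hu j) (Epos _) (by have := hu2 (j+1); push_cast at this; exact this)
    have step2 : (N (u j) / E (u j)) * (E (u j) / E (u (j+1))) = N (u j) / E (u (j+1)) := by
      rw [div_mul_div_comm, mul_comm (N (u j)) (E (u j)), mul_div_mul_left _ _ (Epos _).ne']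
    calc (N (u j) / E (u j)) * ((j:ℝ)^2/(((j:ℝ)+1)^2+1))
        ≤ (N (u j) / E (u j)) * (E (u j) / E (u (j+1))) :=
          mul_le_mul_of_nonneg_left step3 (div_nonneg (hNpos _) (Epos _).le)
      _ = N (u j) / E (u (j+1)) := step2
      _ ≤ N n / E n := step1
  · -- upper bound
    filter_upwards [hJ1] with n hn
    set j := J n with hj
    have hj2pos : (0:ℝ) < (j:ℝ)^2 := by
      have : (1:ℝ) ≤ (j:ℝ) := by exact_mod_cast hn
      nlinarith
    have step1 : N n / E n ≤ N (u (j+1)) / E (u j) :=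
      div_le_div₀ (hNpos _) (hNmono (hlt n).le) (Epos _) (hEmono (hspec n))
    have step3 : E (u (j+1)) / E (u j) ≤ (((j:ℝ)+1)^2+1)/(j:ℝ)^2 := by
      refine div_le_div₀ (by positivity) (by have := hu2 (j+1); push_cast at this; exact this) hj2pos (hu j)
    have step2 : (N (u (j+1)) / E (u (j+1))) * (E (u (j+1)) / E (u j)) = N (u (j+1)) / E (u j) := by
      rw [div_mul_div_comm, mul_comm (N (u (j+1))) (E (u (j+1))), mul_div_mul_left _ _ (Epos _).ne']
    calc N n / E n ≤ N (u (j+1)) / E (u j) := step1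
      _ = (N (u (j+1)) / E (u (j+1))) * (E (u (j+1)) / E (u j)) := step2.symm
      _ ≤ (N (u (j+1)) / E (u (j+1))) * ((((j:ℝ)+1)^2+1)/(j:ℝ)^2) :=
          mul_le_mul_of_nonneg_left step3 (div_nonneg (hNpos _) (Epos _).le)


theorem slln_aux2 {Ω : Type*} [MeasurableSpace Ω] (P : Measure Ω) [IsProbabilityMeasure P]
    (I : ℕ → Ω → ℝ) (p : ℕ → ℝ) (E : ℕ → ℝ)
    (hI : ∀ n, Measurable (I n))
    (hindep : iIndepFun I P)
    (hber : ∀ n ω, I n ω = 0 ∨ I n ω = 1)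
    (hp : ∀ n, (P {ω | I n ω = 1}).toReal = p n)
    (hp_pos : ∀ n, 0 < p n) (hp_le1 : ∀ n, p n ≤ 1) (hp0 : p 0 = 1)
    (hE_def : ∀ n, E n = ∑ k ∈ Finset.range (n + 1), p k)
    (hE_top : Tendsto E atTop atTop) :
    ∀ᵐ ω ∂P, Tendsto
      (fun n => (∑ k ∈ Finset.range (n + 1), I k ω) / E n) atTop (nhds 1) := by
  classical
  -- basic properties of E
  have hE_mono : Monotone E := by
    apply monotone_nat_of_le_succ
    intro n
    rw [hE_def, hE_def, Finset.sum_range_succ (n := n + 1)]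
    have := (hp_pos (n+1)).le
    linarith
  have hE0 : E 0 = 1 := by rw [hE_def]; simp [hp0]
  have hE1 : ∀ n, 1 ≤ E n := fun n => hE0 ▸ hE_mono (Nat.zero_le n)
  have hE_pos : ∀ n, (0:ℝ) < E n := fun n => lt_of_lt_of_le one_pos (hE1 n)
  have hEn : ∀ n, E n ≤ n + 1 := by
    intro n
    rw [hE_def]
    calc (∑ k ∈ Finset.range (n+1), p k) ≤ ∑ k ∈ Finset.range (n+1), (1:ℝ) :=
        Finset.sum_le_sum (fun k _ => hp_le1 k)
      _ = n + 1 := by simp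
  -- probabilistic facts
  have hmem2 : ∀ n, MemLp (I n) 2 P := by
    intro n
    have hb : ∀ᵐ ω ∂P, ‖I n ω‖ ≤ 1 :=
      Eventually.of_forall (fun ω => by rcases hber n ω with h|h <;> simp [h])
    exact (memLp_top_of_bound (hI n).aestronglyMeasurable 1 hb).mono_exponent le_top
  have hint : ∀ n, ∫ ω, I n ω ∂P = p n := by
    intro n
    have hA : MeasurableSet {ω | I n ω = 1} := hI n (measurableSet_singleton 1)
    have hfun : I n = Set.indicator {ω | I n ω = 1} (fun _ => (1:ℝ)) := by
      funext ω
      rcases hber n ω with h|h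
      · rw [Set.indicator_of_notMem (by simp [Set.mem_setOf_eq, h]), h]
      · rw [Set.indicator_of_mem (by exact h), h]
    rw [hfun, integral_indicator_const (1:ℝ) hA, smul_eq_mul, mul_one, measureReal_def, hp n]
  have hsq : ∀ n, (I n) ^ 2 = I n := by
    intro n; funext ω
    rcases hber n ω with h|h <;> simp [h]
  have hvar1 : ∀ n, variance (I n) P ≤ p n := by
    intro n
    rw [variance_eq_sub (hmem2 n), hsq n, hint n]
    nlinarith [sq_nonneg (p n)]
  have hvar1' : ∀ n, (0:ℝ) ≤ variance (I n) P := fun n => variance_nonneg _ _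
  -- facts about the sums N n
  have hNmem : ∀ n, MemLp (fun ω => ∑ k ∈ Finset.range (n+1), I k ω) 2 P := by
    intro n
    have : (fun ω => ∑ k ∈ Finset.range (n+1), I k ω)
        = ∑ k ∈ Finset.range (n+1), I k := by
      funext ω; rw [Finset.sum_apply]
    rw [this]
    exact memLp_finsetSum' _ (fun k _ => hmem2 k)
  have hNint : ∀ n, ∫ ω, (∑ k ∈ Finset.range (n+1), I k ω) ∂P = E n := by
    intro n
    rw [integral_finset_sum _ (fun k _ => (hmem2 k).integrable one_le_two), hE_def]
    exact Finset.sum_congr rfl (fun k _ => hint k)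
  have hNvar : ∀ n, variance (fun ω => ∑ k ∈ Finset.range (n+1), I k ω) P ≤ E n := by
    intro n
    have heq : (fun ω => ∑ k ∈ Finset.range (n+1), I k ω)
        = ∑ k ∈ Finset.range (n+1), I k := by
      funext ω; rw [Finset.sum_apply]
    rw [heq, IndepFun.variance_sum (fun k _ => hmem2 k)
      (fun i _ j _ hij => hindep.indepFun hij), hE_def]
    exact Finset.sum_le_sum (fun k _ => hvar1 k)
  -- the subsequence u
  have hfind : ∀ j : ℕ, ∃ n, (j:ℝ)^2 ≤ E n := fun j => (hE_top.eventually_ge_atTop _).exists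
  set u : ℕ → ℕ := fun j => Nat.find (hfind j) with hu_def
  have hu : ∀ j : ℕ, (j:ℝ)^2 ≤ E (u j) := fun j => Nat.find_spec (hfind j)
  have hu0 : u 0 = 0 :=
    Nat.eq_zero_of_le_zero (Nat.find_min' (hfind 0) (by simpa using (hE_pos 0).le))
  have hu2 : ∀ j, E (u j) ≤ (j:ℝ)^2 + 1 := by
    intro j
    by_cases h0 : u j = 0
    · rw [h0, hE0]
      nlinarith [sq_nonneg (j:ℝ)]
    · obtain ⟨m, hm⟩ : ∃ m, u j = m + 1 := ⟨u j - 1, by omega⟩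
      have hlt' : m < u j := by omega
      have hmin : ¬ ((j:ℝ)^2 ≤ E m) := Nat.find_min (hfind j) hlt'
      push_neg at hmin
      have hEs : E (m+1) = E m + p (m+1) := by
        rw [hE_def, hE_def, Finset.sum_range_succ (n := m + 1)]
      rw [hm, hEs]
      have := hp_le1 (m+1)
      linarith
  -- a.s. convergence along the subsequence
  have key : ∀ᵐ ω ∂P, Tendsto
      (fun j => (∑ k ∈ Finset.range (u j + 1), I k ω) / E (u j)) atTop (nhds 1) := by
    have hBC : ∀ m : ℕ, ∀ᵐ ω ∂P, ∀ᶠ j in atTop,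
        ¬ ((1/((m:ℝ)+1)) * E (u j) ≤ |(∑ k ∈ Finset.range (u j + 1), I k ω) - E (u j)|) := by
      intro m
      have hε : (0:ℝ) < 1/((m:ℝ)+1) := by positivity
      set S : ℕ → Set Ω := fun j =>
        {ω | (1/((m:ℝ)+1)) * E (u j) ≤ |(∑ k ∈ Finset.range (u j + 1), I k ω) - E (u j)|}
        with hS
      have hSm : ∀ j, P (S j) ≤ ENNReal.ofReal (4 * ((m:ℝ)+1)^2 / ((j:ℝ)+1)^2) := by
        intro j
        have hEp := hE_pos (u j)
        have hcheb := meas_ge_le_variance_div_sq (μ := P) (hNmem (u j)) (mul_pos hε hEp)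
        rw [show (P[fun ω => ∑ k ∈ Finset.range (u j + 1), I k ω]) = E (u j) from hNint (u j)]
          at hcheb
        refine le_trans hcheb (ENNReal.ofReal_le_ofReal ?_)
        have h4 : ((j:ℝ)+1)^2 ≤ 4 * E (u j) := by
          nlinarith [hu j, hE1 (u j), sq_nonneg ((j:ℝ)-1)]
        have hvar := hNvar (u j)
        have hsq2 : (0:ℝ) < (1/((m:ℝ)+1) * E (u j))^2 := by positivity
        calc variance (fun ω => ∑ k ∈ Finset.range (u j + 1), I k ω) P
              / (1/((m:ℝ)+1) * E (u j))^2
            ≤ E (u j) / (1/((m:ℝ)+1) * E (u j))^2 := by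
              gcongr
          _ = ((m:ℝ)+1)^2 / E (u j) := by
              field_simp
          _ ≤ 4 * ((m:ℝ)+1)^2 / ((j:ℝ)+1)^2 := by
              rw [div_le_div_iff₀ hEp (by positivity)]
              nlinarith [sq_nonneg ((m:ℝ)+1)]
      have hsum : (∑' j, P (S j)) ≠ ⊤ := by
        have hsummable : Summable (fun j : ℕ => 4 * ((m:ℝ)+1)^2 / ((j:ℝ)+1)^2) := by
          have h := (summable_nat_add_iff 1).2
            (Real.summable_one_div_nat_pow.2 (by norm_num : 1 < 2))
          have h2 := h.mul_left (4*((m:ℝ)+1)^2)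
          refine h2.congr (fun j => ?_)
          push_cast
          ring
        refine ne_top_of_le_ne_top ?_ (ENNReal.tsum_le_tsum hSm)
        rw [← ENNReal.ofReal_tsum_of_nonneg (fun j => by positivity) hsummable]
        exact ENNReal.ofReal_ne_top
      filter_upwards [ae_eventually_notMem hsum] with ω hω
      refine hω.mono (fun j hj => ?_)
      simpa [hS, Set.mem_setOf_eq] using hj
    filter_upwards [ae_all_iff.2 hBC] with ω hω
    rw [Metric.tendsto_atTop]
    intro ε hεpos
    obtain ⟨m, hm⟩ := exists_nat_one_div_lt hεpos
    obtain ⟨M, hM⟩ := eventually_atTop.1 (hω m)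
    refine ⟨M, fun j hj => ?_⟩
    have h := hM j hj
    push_neg at h
    have hEp := hE_pos (u j)
    rw [Real.dist_eq]
    have heq : (∑ k ∈ Finset.range (u j + 1), I k ω) / E (u j) - 1
        = ((∑ k ∈ Finset.range (u j + 1), I k ω) - E (u j)) / E (u j) := by
      field_simp
    rw [heq, abs_div, abs_of_pos hEp]
    have hlt2 : |(∑ k ∈ Finset.range (u j + 1), I k ω) - E (u j)| / E (u j) < 1/((m:ℝ)+1) := by
      rw [div_lt_iff₀ hEp]
      calc |(∑ k ∈ Finset.range (u j + 1), I k ω) - E (u j)|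
          < 1/((m:ℝ)+1) * E (u j) := h
        _ = 1/((m:ℝ)+1) * E (u j) := rfl
    exact lt_trans hlt2 hm
  -- final assembly via the sandwich lemma
  filter_upwards [key] with ω hω
  have hNmono : Monotone (fun n => ∑ k ∈ Finset.range (n + 1), I k ω) := by
    apply monotone_nat_of_le_succ
    intro n
    rw [Finset.sum_range_succ (n := n + 1)]
    rcases hber (n+1) ω with h|h <;> rw [h] <;> linarith
  have hNpos : ∀ n, (0:ℝ) ≤ ∑ k ∈ Finset.range (n + 1), I k ω := by
    intro n
    apply Finset.sum_nonneg
    intro k _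
    rcases hber k ω with h|h <;> rw [h] <;> norm_num
  exact sandwich_aux (fun n => ∑ k ∈ Finset.range (n + 1), I k ω) E u
    hNmono hNpos hE_mono hE1 hEn hu0 hu hu2 hω

/-- SLLN for the number of records in the `F^α`-scheme: `N n / E n → 1` a.s. -/
theorem records_slln
    {Ω : Type*} [MeasurableSpace Ω] (P : Measure Ω) [IsProbabilityMeasure P]
    (α : ℕ → ℝ) (hα : ∀ n, 0 < α n)
    (hs : Tendsto (fun n => ∑ k ∈ Finset.range (n + 1), α k) atTop atTop)
    (I : ℕ → Ω → ℝ) (hI : ∀ n, Measurable (I n))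
    (hindep : iIndepFun I P)
    (hber : ∀ n ω, I n ω = 0 ∨ I n ω = 1)
    (hp : ∀ n, (P {ω | I n ω = 1}).toReal
        = α n / ∑ k ∈ Finset.range (n + 1), α k) :
    ∀ᵐ ω ∂P, Tendsto
      (fun n => (∑ k ∈ Finset.range (n + 1), I k ω)
        / ∑ k ∈ Finset.range (n + 1), α k / ∑ j ∈ Finset.range (k + 1), α j)
      atTop (nhds 1) := by
  classical
  have hs_pos : ∀ n, 0 < ∑ k ∈ Finset.range (n+1), α k :=
    fun n => Finset.sum_pos (fun k _ => hα k) (by simp)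
  have hs_mono : Monotone (fun n => ∑ k ∈ Finset.range (n+1), α k) := by
    apply monotone_nat_of_le_succ
    intro n
    rw [Finset.sum_range_succ (n := n + 1)]
    have := (hα (n+1)).le
    linarith
  have hp_pos : ∀ n, 0 < α n / ∑ j ∈ Finset.range (n+1), α j :=
    fun n => div_pos (hα n) (hs_pos n)
  have hp_le1 : ∀ n, α n / ∑ j ∈ Finset.range (n+1), α j ≤ 1 := by
    intro n
    rw [div_le_one (hs_pos n)]
    exact Finset.single_le_sum (f := α) (fun k _ => (hα k).le) (Finset.self_mem_range_succ n)
  have hp0 : α 0 / ∑ j ∈ Finset.range (0+1), α j = 1 := by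
    rw [show (0:ℕ)+1 = 1 from rfl, Finset.sum_range_one]
    exact div_self (hα 0).ne'
  have hE_mono : Monotone (fun n => ∑ k ∈ Finset.range (n+1),
      α k / ∑ j ∈ Finset.range (k+1), α j) := by
    apply monotone_nat_of_le_succ
    intro n
    rw [Finset.sum_range_succ (n := n + 1)]
    have := (hp_pos (n+1)).le
    linarith
  -- Abel–Dini type step
  have hstep : ∀ n, ∃ m, n ≤ m ∧
      (∑ k ∈ Finset.range (n+1), α k / ∑ j ∈ Finset.range (k+1), α j) + 1/2
        ≤ ∑ k ∈ Finset.range (m+1), α k / ∑ j ∈ Finset.range (k+1), α j := by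
    intro n
    obtain ⟨m, hmn, hm⟩ := ((eventually_ge_atTop n).and
      (hs.eventually_ge_atTop (2 * ∑ k ∈ Finset.range (n+1), α k))).exists
    refine ⟨m, hmn, ?_⟩
    have hnm : n + 1 ≤ m + 1 := by omega
    have h1 := Finset.sum_Ico_eq_sub
      (fun k => α k / ∑ j ∈ Finset.range (k+1), α j) hnm
    have h2 := Finset.sum_Ico_eq_sub α hnm
    have h3 : ∀ k ∈ Finset.Ico (n+1) (m+1),
        α k / ∑ j ∈ Finset.range (m+1), α j ≤ α k / ∑ j ∈ Finset.range (k+1), α j := by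
      intro k hk
      rw [Finset.mem_Ico] at hk
      exact div_le_div_of_nonneg_left (hα k).le (hs_pos k) (hs_mono (by omega : k ≤ m))
    have h4 : (∑ k ∈ Finset.Ico (n+1) (m+1), α k) / ∑ j ∈ Finset.range (m+1), α j
        ≤ ∑ k ∈ Finset.Ico (n+1) (m+1), α k / ∑ j ∈ Finset.range (k+1), α j := by
      rw [Finset.sum_div]
      exact Finset.sum_le_sum h3
    have h5 : (1:ℝ)/2 ≤ (∑ k ∈ Finset.Ico (n+1) (m+1), α k)
        / ∑ j ∈ Finset.range (m+1), α j := by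
      rw [h2, le_div_iff₀ (hs_pos m)]
      have hsn := hs_pos n
      linarith
    rw [h1] at h4
    linarith
  -- unboundedness of E
  have hunb : ∀ b : ℝ, ∃ n, b ≤ ∑ k ∈ Finset.range (n+1),
      α k / ∑ j ∈ Finset.range (k+1), α j := by
    have hk : ∀ k : ℕ, ∃ n, 1 + (k:ℝ)/2 ≤ ∑ i ∈ Finset.range (n+1),
        α i / ∑ j ∈ Finset.range (i+1), α j := by
      intro k
      induction k with
      | zero =>
        refine ⟨0, ?_⟩
        rw [show (0:ℕ)+1 = 1 from rfl, Finset.sum_range_one, hp0]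
        norm_num
      | succ k ih =>
        obtain ⟨n, hn⟩ := ih
        obtain ⟨m, hmn, hm⟩ := hstep n
        refine ⟨m, ?_⟩
        push_cast
        linarith
    intro b
    obtain ⟨k, hk'⟩ := exists_nat_ge b
    obtain ⟨n2, hn2⟩ := hk (2*k)
    refine ⟨n2, le_trans ?_ hn2⟩
    push_cast
    linarith
  have hE_top : Tendsto (fun n => ∑ k ∈ Finset.range (n+1),
      α k / ∑ j ∈ Finset.range (k+1), α j) atTop atTop :=
    tendsto_atTop_atTop_of_monotone hE_mono hunb
  exact slln_aux2 P I (fun n => α n / ∑ j ∈ Finset.range (n+1), α j)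
    (fun n => ∑ k ∈ Finset.range (n+1), α k / ∑ j ∈ Finset.range (k+1), α j)
    hI hindep hber hp hp_pos hp_le1 hp0 (fun n => rfl) hE_top
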